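/- Suppose v₀(a) satisfies on (0,1) the conditions: a(1-a)(1-2a)·d/da[(1-2a)v₀(a)] = -Z(a)(1-2a)v₀(a) with Z continuous and positive, and the boundary conditions (1-2a)v₀(a) → 0 as a → 0⁺, a → 1/2, and a → 1⁻. Then (1-2a)v₀(a) ≡ 0 on (0,1). -/

import Mathlib

open Set Filter

theorem stmt_15 (Z v0 : ℝ → ℝ)
    (hZc : ContinuousOn Z (Ioo 0 1)) (hZpos : ∀ a ∈ Ioo (0:ℝ) 1, 0 < Z a)
    (hODE : ∀ a ∈ Ioo (0:ℝ) 1, a ≠ 1/2 →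
      HasDerivAt (fun a => (1 - 2*a) * v0 a)
        (-(Z a) * ((1 - 2*a) * v0 a) / (a * (1-a) * (1 - 2*a))) a)
    (hb0 : Tendsto (fun a => (1 - 2*a) * v0 a) (nhdsWithin 0 (Ioi 0)) (nhds 0))
    (hbhalf : Tendsto (fun a => (1 - 2*a) * v0 a)
      (nhdsWithin (1/2) {(1:ℝ)/2}ᶜ) (nhds 0))
    (hb1 : Tendsto (fun a => (1 - 2*a) * v0 a) (nhdsWithin 1 (Iio 1)) (nhds 0)) :
    ∀ a ∈ Ioo (0:ℝ) 1, (1 - 2*a) * v0 a = 0 := by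
  set w : ℝ → ℝ := fun a => (1 - 2*a) * v0 a with hw
  set g : ℝ → ℝ := fun a => (w a)^2 with hg
  -- derivative of g
  have hgderiv : ∀ a ∈ Ioo (0:ℝ) 1, a ≠ 1/2 →
      HasDerivAt g (2 * w a * (-(Z a) * w a / (a * (1-a) * (1 - 2*a)))) a := by
    intro a ha hne
    have h := (hODE a ha hne).fun_pow 2
    refine h.congr_deriv ?_
    simp only [hw]
    push_cast
    ring
  -- sign of numerator pieces
  have key : ∀ a ∈ Ioo (0:ℝ) 1, a ≠ 1/2 →
      2 * w a * (-(Z a) * w a / (a * (1-a) * (1 - 2*a)))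
        = -(2 * Z a * (w a)^2) / (a * (1-a) * (1 - 2*a)) := by
    intro a ha hne; ring
  -- Case 1 : a ∈ Ioo 0 (1/2)
  have case1 : ∀ a ∈ Ioo (0:ℝ) (1/2), g a = 0 := by
    have hsub : Ioo (0:ℝ) (1/2) ⊆ Ioo 0 1 := by
      intro x hx; exact ⟨hx.1, lt_trans hx.2 (by norm_num)⟩
    have hderiv : ∀ a ∈ Ioo (0:ℝ) (1/2), deriv g a ≤ 0 := by
      intro a ha
      have hne : a ≠ 1/2 := ne_of_lt ha.2
      have hd := hgderiv a (hsub ha) hne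
      rw [hd.deriv, key a (hsub ha) hne]
      have hden : 0 < a * (1-a) * (1 - 2*a) := by
        have h1 : (0:ℝ) < a := ha.1
        have h2 : (0:ℝ) < 1 - a := by nlinarith [ha.2]
        have h3 : (0:ℝ) < 1 - 2*a := by nlinarith [ha.2]
        positivity
      have hnum : 0 ≤ 2 * Z a * (w a)^2 := by
        have := (hZpos a (hsub ha)).le
        positivity
      rw [div_nonpos_iff]
      right
      exact ⟨by linarith, hden.le⟩
    have hcont : ContinuousOn g (Ioo (0:ℝ) (1/2)) := by
      intro a ha
      exact ((hgderiv a (hsub ha) (ne_of_lt ha.2)).continuousAt).continuousWithinAt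
    have hanti : AntitoneOn g (Ioo (0:ℝ) (1/2)) := by
      apply antitoneOn_of_deriv_nonpos (convex_Ioo _ _) hcont
      · rw [interior_Ioo]
        intro x hx
        exact ((hgderiv x (hsub hx) (ne_of_lt hx.2)).differentiableAt).differentiableWithinAt
      · rw [interior_Ioo]
        exact hderiv
    intro a ha
    -- g a ≤ g t for t near 0, and g t → 0
    have htend : Tendsto g (nhdsWithin 0 (Ioi 0)) (nhds 0) := by
      have := hb0.pow 2
      simpa [hg, hw] using this
    have hev : ∀ᶠ t in nhdsWithin (0:ℝ) (Ioi 0), g a ≤ g t := by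
      filter_upwards [self_mem_nhdsWithin,
        Ioo_mem_nhdsGT_of_mem (by constructor <;> [rfl; exact ha.1] : (0:ℝ) ∈ Ico 0 a)]
        with t ht ht'
      exact hanti ⟨ht, lt_trans ht'.2 ha.2⟩ ha ht'.2.le
    have hle : g a ≤ 0 := ge_of_tendsto htend hev
    have hge : 0 ≤ g a := sq_nonneg _
    linarith
  -- Case 2 : a ∈ Ioo (1/2) 1
  have case2 : ∀ a ∈ Ioo (1/2:ℝ) 1, g a = 0 := by
    have hsub : Ioo (1/2:ℝ) 1 ⊆ Ioo 0 1 := by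
      intro x hx; exact ⟨lt_trans (by norm_num) hx.1, hx.2⟩
    have hderiv : ∀ a ∈ Ioo (1/2:ℝ) 1, 0 ≤ deriv g a := by
      intro a ha
      have hne : a ≠ 1/2 := ne_of_gt ha.1
      have hd := hgderiv a (hsub ha) hne
      rw [hd.deriv, key a (hsub ha) hne]
      have hden : a * (1-a) * (1 - 2*a) < 0 := by
        have h1 : (0:ℝ) < a := lt_trans (by norm_num) ha.1
        have h2 : (0:ℝ) < 1 - a := by nlinarith [ha.2]
        have h3 : 1 - 2*a < 0 := by nlinarith [ha.1]
        have h4 : 0 < a * (1-a) := by positivity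
        exact mul_neg_of_pos_of_neg h4 h3
      have hnum : 0 ≤ 2 * Z a * (w a)^2 := by
        have := (hZpos a (hsub ha)).le
        positivity
      rw [div_nonneg_iff]
      right
      exact ⟨by linarith, hden.le⟩
    have hcont : ContinuousOn g (Ioo (1/2:ℝ) 1) := by
      intro a ha
      exact ((hgderiv a (hsub ha) (ne_of_gt ha.1)).continuousAt).continuousWithinAt
    have hmono : MonotoneOn g (Ioo (1/2:ℝ) 1) := by
      apply monotoneOn_of_deriv_nonneg (convex_Ioo _ _) hcont
      · rw [interior_Ioo]
        intro x hx
        exact ((hgderiv x (hsub hx) (ne_of_gt hx.1)).differentiableAt).differentiableWithinAt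
      · rw [interior_Ioo]
        exact hderiv
    intro a ha
    have htend : Tendsto g (nhdsWithin 1 (Iio 1)) (nhds 0) := by
      have := hb1.pow 2
      simpa [hg, hw] using this
    have hev : ∀ᶠ t in nhdsWithin (1:ℝ) (Iio 1), g a ≤ g t := by
      filter_upwards [self_mem_nhdsWithin,
        Ioo_mem_nhdsLT_of_mem (by constructor <;> [exact ha.2; rfl] : (1:ℝ) ∈ Ioc a 1)]
        with t ht ht'
      exact hmono ha ⟨lt_trans ha.1 ht'.1, ht⟩ ht'.1.le
    have hle : g a ≤ 0 := ge_of_tendsto htend hev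
    have hge : 0 ≤ g a := sq_nonneg _
    linarith
  -- conclude
  intro a ha
  rcases lt_trichotomy a (1/2) with h | h | h
  · have := case1 a ⟨ha.1, h⟩
    have : w a = 0 := by
      have := sq_eq_zero_iff.mp this
      exact this
    simpa [hw] using this
  · rw [h]; norm_num
  · have := case2 a ⟨h, ha.2⟩
    have : w a = 0 := sq_eq_zero_iff.mp this
    simpa [hw] using this
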